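/- Fix a finite input alphabet X = G × B × C, where G = {a,b}, B = {0,1}, and C is a finite set of nonnegative real costs, an output alphabet Y = B, a function θ : X → ℝ with θ(x) > 0 for every x ∈ X and Σ_{x∈X} θ(x) = 1, a horizon T ∈ ℕ, a function φ from finite sequences over X × Y to ℝ (the fairness property), and a threshold κ ∈ ℝ. For a finite sequence (trace) τ over X × Y of length at most T, define v(τ) ∈ [0,∞] (the extended nonnegative reals) as the infimum, over all functions π that map each pair (σ, x) of a trace σ of length less than T − |τ| and an input x ∈ X to an output in Y and that satisfy φ(ττ') ≤ κ for every length-(T−|τ|) continuation τ' = (x_1,y_1)…(x_{T−|τ|}, y_{T−|τ|}) in which each y_i equals π applied to the preceding portion of τ' and x_i, of the expected cost Σ_{τ'} (Π_{i} θ(x_i)) · (Σ_i c_i·1[y_i ≠ r_i]), where the outer sum ranges over all continuations τ' generated by π and each x_i = (g_i, r_i, c_i); the infimum over the empty set is ∞. Then: (1) if |τ| = T, then v(τ) = 0 when φ(τ) ≤ κ and v(τ) = ∞ otherwise; and (2) if |τ| < T, then v(τ) = Σ_{x=(g,r,c)∈X} θ(x) · min( v(τ·(x,r)), c + v(τ·(x,1−r))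 ). -/

import Mathlib

open scoped ENNReal
open Classical

/-- The input alphabet `X = G × B × C`: a group in `G = {a,b}` (modelled as
`Bool`), a recommended decision in `B = {0,1}` (modelled as `Bool`), and an
intervention cost drawn from a finite set `C` of real costs. -/
abbrev ShieldInput (C : Finset ℝ) := Bool × Bool × {c // c ∈ C}

/-- A trace entry: an input together with the final decision in `Y = B`. -/
abbrev ShieldEntry (C : Finset ℝ) := ShieldInput C × Bool

/-- A continuation `τ'` is generated by the shield `π` if each of its decisions
`y_i` equals `π` applied to the preceding portion of `τ'` and the input `x_i`. -/
def Generated {C : Finset ℝ} (π : List (ShieldEntry C) → ShieldInput C → Bool)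
    (τ' : List (ShieldEntry C)) : Prop :=
  ∀ i (h : i < τ'.length),
    (τ'.get ⟨i, h⟩).2 = π (τ'.take i) (τ'.get ⟨i, h⟩).1

/-- Total intervention cost `Σ_i c_i·1[y_i ≠ r_i]` of a trace. -/
def traceCost {C : Finset ℝ} (τ' : List (ShieldEntry C)) : ℝ :=
  (τ'.map fun e => if e.2 ≠ e.1.2.1 then (e.1.2.2 : ℝ) else 0).sum

/-- Probability weight `Π_i θ(x_i)` of a trace. -/
def traceProb {C : Finset ℝ} (θ : ShieldInput C → ℝ)
    (τ' : List (ShieldEntry C)) : ℝ :=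
  (τ'.map fun e => θ e.1).prod

/-- Expected total intervention cost of the shield `π` over the horizon `t`:
the sum, over all length-`t` continuations generated by `π` (encoded as
functions `Fin t → X × Y`), of the probability of the continuation times its
intervention cost. -/
noncomputable def expCost {C : Finset ℝ} (θ : ShieldInput C → ℝ)
    (π : List (ShieldEntry C) → ShieldInput C → Bool) (t : ℕ) : ℝ :=
  ∑ f ∈ Finset.univ.filter
      (fun f : Fin t → ShieldEntry C => Generated π (List.ofFn f)),
    traceProb θ (List.ofFn f) * traceCost (List.ofFn f)

/-- The optimal conditional expected cost `v(τ) ∈ [0,∞]` after the prefix `τ`: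
the infimum, over all shields `π` all of whose generated length-`(T-|τ|)`
continuations `τ'` satisfy `φ(ττ') ≤ κ`, of the expected intervention cost of
`π` over the horizon `T - |τ|` (the infimum of the empty set being `∞`). -/
noncomputable def shieldValue {C : Finset ℝ} (θ : ShieldInput C → ℝ)
    (φ : List (ShieldEntry C) → ℝ) (κ : ℝ) (T : ℕ)
    (τ : List (ShieldEntry C)) : ℝ≥0∞ :=
  ⨅ π ∈ {π : List (ShieldEntry C) → ShieldInput C → Bool |
      ∀ τ' : List (ShieldEntry C),
        τ'.length = T - τ.length → Generated π τ' → φ (τ ++ τ') ≤ κ},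
    ENNReal.ofReal (expCost θ π (T - τ.length))



def shift {C : Finset ℝ} (π : List (ShieldEntry C) → ShieldInput C → Bool)
    (e : ShieldEntry C) : List (ShieldEntry C) → ShieldInput C → Bool :=
  fun σ x => π (e :: σ) x

lemma generated_cons {C : Finset ℝ} (π : List (ShieldEntry C) → ShieldInput C → Bool)
    (e : ShieldEntry C) (l : List (ShieldEntry C)) :
    Generated π (e :: l) ↔ e.2 = π [] e.1 ∧ Generated (shift π e) l := by
  constructor
  · intro h
    refine ⟨h 0 (by simp), fun i hi => ?_⟩
    have := h (i+1) (by simpa using Nat.succ_lt_succ hi)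
    simpa [shift] using this
  · rintro ⟨h0, h⟩ i hi
    cases i with
    | zero => simpa using h0
    | succ n =>
      have hn : n < l.length := by simpa using Nat.lt_of_succ_lt_succ hi
      have := h n hn
      simpa [shift] using this

noncomputable def genSum {C : Finset ℝ} (π : List (ShieldEntry C) → ShieldInput C → Bool)
    (t : ℕ) (F : List (ShieldEntry C) → ℝ) : ℝ :=
  ∑ f ∈ Finset.univ.filter
      (fun f : Fin t → ShieldEntry C => Generated π (List.ofFn f)),
    F (List.ofFn f)

lemma genSum_zero {C : Finset ℝ} (π : List (ShieldEntry C) → ShieldInput C → Bool)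
    (F : List (ShieldEntry C) → ℝ) : genSum π 0 F = F [] := by
  rw [genSum]
  rw [Finset.sum_filter]
  rw [Fintype.sum_eq_single (fun i : Fin 0 => i.elim0)
    (fun f hf => absurd (funext fun i => i.elim0) hf)]
  simp [Generated]

lemma genSum_succ {C : Finset ℝ} (π : List (ShieldEntry C) → ShieldInput C → Bool)
    (t : ℕ) (F : List (ShieldEntry C) → ℝ) :
    genSum π (t+1) F = ∑ x : ShieldInput C,
      genSum (shift π (x, π [] x)) t (fun l => F ((x, π [] x) :: l)) := by
  rw [genSum]
  rw [Finset.sum_filter]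
  have reidx : ∀ G : (Fin (t+1) → ShieldEntry C) → ℝ,
      ∑ f : Fin (t+1) → ShieldEntry C, G f
        = ∑ e : ShieldEntry C, ∑ g : Fin t → ShieldEntry C, G (Fin.cons e g) := by
    intro G
    have := Fintype.sum_equiv (Fin.consEquiv fun _ : Fin (t+1) => ShieldEntry C)
      (fun p => G (Fin.cons p.1 p.2)) G (fun p => by simp [Fin.consEquiv])
    rw [← this, Fintype.sum_prod_type]
  rw [reidx]
  have hofn : ∀ (e : ShieldEntry C) (g : Fin t → ShieldEntry C),
      List.ofFn (Fin.cons e g) = e :: List.ofFn g := by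
    intro e g; rw [List.ofFn_succ]; simp
  simp only [hofn]
  rw [Fintype.sum_prod_type]
  refine Finset.sum_congr rfl fun x _ => ?_
  rw [Finset.sum_comm]
  rw [genSum, Finset.sum_filter]
  refine Finset.sum_congr rfl fun g _ => ?_
  simp only [generated_cons]
  have : ∀ y : Bool, (if ((x, y) : ShieldEntry C).2 = π [] ((x,y) : ShieldEntry C).1
        ∧ Generated (shift π ((x,y))) (List.ofFn g)
      then F (((x, y) : ShieldEntry C) :: List.ofFn g) else 0)
      = if y = π [] x then
          (if Generated (shift π ((x, π [] x))) (List.ofFn g)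
            then F (((x, π [] x) : ShieldEntry C) :: List.ofFn g) else 0) else 0 := by
    intro y
    by_cases hy : y = π [] x
    · subst hy; simp
    · simp [hy]
  simp only [this]
  rw [Finset.sum_ite_eq' Finset.univ (π [] x)]
  simp


def stepCost {C : Finset ℝ} (x : ShieldInput C) (y : Bool) : ℝ :=
  if y ≠ x.2.1 then (x.2.2 : ℝ) else 0

lemma stepCost_nonneg {C : Finset ℝ} (hC : ∀ c ∈ C, 0 ≤ c) (x : ShieldInput C)
    (y : Bool) : 0 ≤ stepCost x y := by
  unfold stepCost; split
  · exact hC _ x.2.2.2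
  · rfl

lemma genSum_smul {C : Finset ℝ} (π : List (ShieldEntry C) → ShieldInput C → Bool)
    (t : ℕ) (c : ℝ) (F : List (ShieldEntry C) → ℝ) :
    genSum π t (fun l => c * F l) = c * genSum π t F := by
  unfold genSum; exact (Finset.mul_sum _ _ _).symm

lemma genSum_add {C : Finset ℝ} (π : List (ShieldEntry C) → ShieldInput C → Bool)
    (t : ℕ) (F G : List (ShieldEntry C) → ℝ) :
    genSum π t (fun l => F l + G l) = genSum π t F + genSum π t G := by
  unfold genSum; exact Finset.sum_add_distrib

lemma genSum_prob {C : Finset ℝ} (θ : ShieldInput C → ℝ)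
    (hθsum : ∑ x : ShieldInput C, θ x = 1)
    (π : List (ShieldEntry C) → ShieldInput C → Bool) (t : ℕ) :
    genSum π t (traceProb θ) = 1 := by
  induction t generalizing π with
  | zero => rw [genSum_zero]; simp [traceProb]
  | succ n ih =>
    rw [genSum_succ]
    have : ∀ x : ShieldInput C,
        genSum (shift π (x, π [] x)) n (fun l => traceProb θ ((x, π [] x) :: l))
          = θ x := by
      intro x
      have h1 : (fun l : List (ShieldEntry C) => traceProb θ ((x, π [] x) :: l))
          = fun l => θ x * traceProb θ l := by
        funext l; simp [traceProb]
      rw [h1, genSum_smul, ih, mul_one]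
    simp only [this, hθsum]

lemma expCost_eq_genSum {C : Finset ℝ} (θ : ShieldInput C → ℝ)
    (π : List (ShieldEntry C) → ShieldInput C → Bool) (t : ℕ) :
    expCost θ π t = genSum π t (fun l => traceProb θ l * traceCost l) := rfl

lemma expCost_zero {C : Finset ℝ} (θ : ShieldInput C → ℝ)
    (π : List (ShieldEntry C) → ShieldInput C → Bool) :
    expCost θ π 0 = 0 := by
  rw [expCost_eq_genSum, genSum_zero]; simp [traceCost]

lemma expCost_succ {C : Finset ℝ} (θ : ShieldInput C → ℝ)
    (hθsum : ∑ x : ShieldInput C, θ x = 1)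
    (π : List (ShieldEntry C) → ShieldInput C → Bool) (t : ℕ) :
    expCost θ π (t+1) = ∑ x : ShieldInput C,
      θ x * (stepCost x (π [] x) + expCost θ (shift π (x, π [] x)) t) := by
  rw [expCost_eq_genSum, genSum_succ]
  refine Finset.sum_congr rfl fun x _ => ?_
  have h1 : (fun l : List (ShieldEntry C) =>
        traceProb θ ((x, π [] x) :: l) * traceCost ((x, π [] x) :: l))
      = fun l => θ x * (stepCost x (π [] x) * traceProb θ l
          + traceProb θ l * traceCost l) := by
    funext l
    simp only [traceProb, traceCost, List.map_cons, List.prod_cons, List.sum_cons]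
    have : (if ((x, π [] x) : ShieldEntry C).2 ≠ ((x, π [] x) : ShieldEntry C).1.2.1
        then (((x, π [] x) : ShieldEntry C).1.2.2 : ℝ) else 0) = stepCost x (π [] x) := rfl
    rw [this]; ring
  rw [h1, genSum_smul, genSum_add, genSum_smul, genSum_prob θ hθsum, mul_one,
    ← expCost_eq_genSum]

lemma traceCost_nonneg {C : Finset ℝ} (hC : ∀ c ∈ C, 0 ≤ c)
    (l : List (ShieldEntry C)) : 0 ≤ traceCost l := by
  apply List.sum_nonneg
  intro a ha
  simp only [List.mem_map] at ha
  obtain ⟨e, _, rfl⟩ := ha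
  exact stepCost_nonneg hC e.1 e.2

lemma traceProb_nonneg {C : Finset ℝ} (θ : ShieldInput C → ℝ)
    (hθpos : ∀ x, 0 < θ x) (l : List (ShieldEntry C)) : 0 ≤ traceProb θ l := by
  apply List.prod_nonneg
  intro a ha
  simp only [List.mem_map] at ha
  obtain ⟨e, _, rfl⟩ := ha
  exact (hθpos e.1).le

lemma expCost_nonneg {C : Finset ℝ} (hC : ∀ c ∈ C, 0 ≤ c) (θ : ShieldInput C → ℝ)
    (hθpos : ∀ x, 0 < θ x) (π : List (ShieldEntry C) → ShieldInput C → Bool)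
    (t : ℕ) : 0 ≤ expCost θ π t := by
  apply Finset.sum_nonneg
  intro f _
  exact mul_nonneg (traceProb_nonneg θ hθpos _) (traceCost_nonneg hC _)


section Main
variable {C : Finset ℝ} (hC : ∀ c ∈ C, 0 ≤ c) (θ : ShieldInput C → ℝ)
  (hθpos : ∀ x, 0 < θ x) (hθsum : ∑ x : ShieldInput C, θ x = 1)
  (T : ℕ) (φ : List (ShieldEntry C) → ℝ) (κ : ℝ)

def Feasible (τ : List (ShieldEntry C))
    (π : List (ShieldEntry C) → ShieldInput C → Bool) : Prop :=
  ∀ τ' : List (ShieldEntry C),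
    τ'.length = T - τ.length → Generated π τ' → φ (τ ++ τ') ≤ κ

lemma shieldValue_eq (τ : List (ShieldEntry C)) :
    shieldValue θ φ κ T τ = ⨅ π ∈ {π | Feasible T φ κ τ π},
      ENNReal.ofReal (expCost θ π (T - τ.length)) := rfl

include hC hθpos hθsum in
lemma ofReal_expCost_succ (π : List (ShieldEntry C) → ShieldInput C → Bool)
    (t : ℕ) :
    ENNReal.ofReal (expCost θ π (t+1)) = ∑ x : ShieldInput C,
      ENNReal.ofReal (θ x) * (ENNReal.ofReal (stepCost x (π [] x)) +
        ENNReal.ofReal (expCost θ (shift π (x, π [] x)) t)) := by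
  rw [expCost_succ θ hθsum]
  rw [ENNReal.ofReal_sum_of_nonneg (fun x _ => mul_nonneg (hθpos x).le
    (add_nonneg (stepCost_nonneg hC x _) (expCost_nonneg hC θ hθpos _ _)))]
  refine Finset.sum_congr rfl fun x _ => ?_
  rw [ENNReal.ofReal_mul (hθpos x).le,
    ENNReal.ofReal_add (stepCost_nonneg hC x _) (expCost_nonneg hC θ hθpos _ _)]

lemma feasible_iff_shift (τ : List (ShieldEntry C)) (hτ : τ.length < T)
    (π : List (ShieldEntry C) → ShieldInput C → Bool) :
    Feasible T φ κ τ π ↔ ∀ x : ShieldInput C,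
      Feasible T φ κ (τ ++ [(x, π [] x)]) (shift π (x, π [] x)) := by
  have hlen : ∀ x : ShieldInput C, (τ ++ [((x, π [] x) : ShieldEntry C)]).length
      = τ.length + 1 := by simp
  have hsub : T - τ.length = (T - (τ.length + 1)) + 1 := by omega
  constructor
  · intro h x τ'' hl hg
    have h1 : (((x, π [] x) : ShieldEntry C) :: τ'').length = T - τ.length := by
      simp only [List.length_cons]
      rw [hl, hlen x] at *
      omega
    have h2 : Generated π ((x, π [] x) :: τ'') := by
      rw [generated_cons]; exact ⟨rfl, hg⟩
    have := h _ h1 h2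
    simpa using this
  · intro h τ' hl hg
    rw [hsub] at hl
    cases τ' with
    | nil => simp at hl
    | cons e l =>
      rw [generated_cons] at hg
      obtain ⟨h0, hgen⟩ := hg
      have he : e = (e.1, π [] e.1) := by
        cases e; simp at h0 ⊢; exact h0
      rw [he] at hgen ⊢
      have := h e.1 l (by rw [hlen]; simpa using hl) hgen
      simpa using this

lemma shieldValue_horizon (τ : List (ShieldEntry C)) (hτ : τ.length = T) :
    shieldValue θ φ κ T τ = if φ τ ≤ κ then 0 else ⊤ := by
  rw [shieldValue_eq]
  have h0 : T - τ.length = 0 := by omega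
  simp only [h0, expCost_zero, ENNReal.ofReal_zero]
  by_cases hφ : φ τ ≤ κ
  · rw [if_pos hφ]
    refine le_antisymm ?_ zero_le
    refine iInf₂_le (fun _ _ => true) ?_
    intro τ' hl _
    rw [h0] at hl
    have : τ' = [] := List.eq_nil_of_length_eq_zero hl
    subst this
    simpa using hφ
  · rw [if_neg hφ]
    have hS : {π : List (ShieldEntry C) → ShieldInput C → Bool |
        Feasible T φ κ τ π} = ∅ := by
      ext π
      simp only [Set.mem_setOf_eq, Set.mem_empty_iff_false, iff_false]
      intro hπ
      have := hπ [] (by simp [h0]) (fun i h => by simp at h)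
      simp at this
      exact hφ this
    rw [hS]
    simp

lemma minTerm_eq (τ : List (ShieldEntry C)) (x : ShieldInput C) :
    min (shieldValue θ φ κ T (τ ++ [(x, x.2.1)]))
      (ENNReal.ofReal (x.2.2 : ℝ) + shieldValue θ φ κ T (τ ++ [(x, !x.2.1)]))
    = ⨅ y : Bool, (ENNReal.ofReal (stepCost x y) +
        shieldValue θ φ κ T (τ ++ [(x, y)])) := by
  rw [iInf_bool_eq]
  obtain ⟨g, r, c⟩ := x
  cases r with
  | false =>
    simp only [stepCost, Bool.not_false]
    norm_num
    exact min_comm _ _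
  | true =>
    simp only [stepCost, Bool.not_true]
    norm_num

include hC hθpos hθsum in
lemma step_ge (τ : List (ShieldEntry C)) (hτ : τ.length < T) :
    ∑ x : ShieldInput C, ENNReal.ofReal (θ x) *
        min (shieldValue θ φ κ T (τ ++ [(x, x.2.1)]))
          (ENNReal.ofReal (x.2.2 : ℝ) + shieldValue θ φ κ T (τ ++ [(x, !x.2.1)]))
      ≤ shieldValue θ φ κ T τ := by
  rw [shieldValue_eq]
  refine le_iInf₂ fun π hπ => ?_
  have hsub : T - τ.length = (T - (τ.length + 1)) + 1 := by omega
  rw [hsub, ofReal_expCost_succ hC θ hθpos hθsum]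
  refine Finset.sum_le_sum fun x _ => ?_
  refine mul_le_mul_right ?_ _
  rw [minTerm_eq]
  refine le_trans (iInf_le _ (π [] x)) ?_
  refine add_le_add_right ?_ _
  have hfeas := (feasible_iff_shift T φ κ τ hτ π).1 hπ x
  have hlen : (τ ++ [((x, π [] x) : ShieldEntry C)]).length = τ.length + 1 := by simp
  calc shieldValue θ φ κ T (τ ++ [(x, π [] x)])
      ≤ ENNReal.ofReal (expCost θ (shift π (x, π [] x))
          (T - (τ ++ [((x, π [] x) : ShieldEntry C)]).length)) :=
        iInf₂_le _ hfeas
    _ = _ := by rw [hlen]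

def glue (y : ShieldInput C → Bool)
    (ps : ShieldInput C → List (ShieldEntry C) → ShieldInput C → Bool) :
    List (ShieldEntry C) → ShieldInput C → Bool
  | [], x => y x
  | e :: σ, x => ps e.1 σ x

lemma glue_nil (y : ShieldInput C → Bool)
    (ps : ShieldInput C → List (ShieldEntry C) → ShieldInput C → Bool)
    (x : ShieldInput C) : glue y ps [] x = y x := rfl

lemma shift_glue (y : ShieldInput C → Bool)
    (ps : ShieldInput C → List (ShieldEntry C) → ShieldInput C → Bool)
    (e : ShieldEntry C) : shift (glue y ps) e = ps e.1 := by
  funext σ x; rfl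

include hC hθpos hθsum in
lemma step_le (τ : List (ShieldEntry C)) (hτ : τ.length < T) :
    shieldValue θ φ κ T τ ≤ ∑ x : ShieldInput C, ENNReal.ofReal (θ x) *
        min (shieldValue θ φ κ T (τ ++ [(x, x.2.1)]))
          (ENNReal.ofReal (x.2.2 : ℝ) +
            shieldValue θ φ κ T (τ ++ [(x, !x.2.1)])) := by
  set s := T - (τ.length + 1) with hs
  have hsub : T - τ.length = s + 1 := by omega
  set m : ShieldInput C → ℝ≥0∞ := fun x =>
    min (shieldValue θ φ κ T (τ ++ [(x, x.2.1)]))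
      (ENNReal.ofReal (x.2.2 : ℝ) + shieldValue θ φ κ T (τ ++ [(x, !x.2.1)]))
    with hm
  rcases eq_or_ne (∑ x : ShieldInput C, ENNReal.ofReal (θ x) * m x) ⊤ with h | h
  · rw [h]; exact le_top
  refine ENNReal.le_of_forall_pos_le_add fun ε hε hlt => ?_
  -- each m x is finite
  have hmne : ∀ x : ShieldInput C, m x ≠ ⊤ := by
    intro x
    intro hmx
    apply h
    refine ENNReal.sum_eq_top.2 ⟨x, Finset.mem_univ x, ?_⟩
    rw [hmx, ENNReal.mul_top]
    simp only [ne_eq, ENNReal.ofReal_eq_zero, not_le]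
    exact hθpos x
  -- rewrite m x as an iInf over (y, feasible shield) pairs
  have hmx : ∀ x : ShieldInput C, m x = ⨅ y : Bool,
      ⨅ π' : {π' : List (ShieldEntry C) → ShieldInput C → Bool |
          Feasible T φ κ (τ ++ [(x, y)]) π'},
        (ENNReal.ofReal (stepCost x y) + ENNReal.ofReal (expCost θ π'.1 s)) := by
    intro x
    rw [hm]
    show min (shieldValue θ φ κ T (τ ++ [(x, x.2.1)]))
      (ENNReal.ofReal (x.2.2 : ℝ) + shieldValue θ φ κ T (τ ++ [(x, !x.2.1)])) = _
    rw [minTerm_eq]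
    refine iInf_congr fun y => ?_
    rw [shieldValue_eq]
    have hlen : (τ ++ [((x, y) : ShieldEntry C)]).length = τ.length + 1 := by simp
    rw [hlen, ← hs, ← iInf_subtype'', ENNReal.add_iInf]
  -- pick near-optimal choices
  have hex : ∀ x : ShieldInput C, ∃ y : Bool,
      ∃ π' : {π' : List (ShieldEntry C) → ShieldInput C → Bool |
          Feasible T φ κ (τ ++ [(x, y)]) π'},
        ENNReal.ofReal (stepCost x y) + ENNReal.ofReal (expCost θ π'.1 s)
          < m x + ε := by
    intro x
    have hlt2 : m x < m x + ε :=
      ENNReal.lt_add_right (hmne x) (by exact_mod_cast hε.ne')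
    rw [hmx x] at hlt2
    rw [iInf_lt_iff] at hlt2
    obtain ⟨y, hy⟩ := hlt2
    rw [iInf_lt_iff] at hy
    obtain ⟨p, hp⟩ := hy
    rw [← hmx x] at hp
    exact ⟨y, p, hp⟩
  choose y p hyp using hex
  set π : List (ShieldEntry C) → ShieldInput C → Bool :=
    glue y (fun x => (p x).1) with hπdef
  have hπnil : ∀ x, π [] x = y x := fun x => rfl
  have hπshift : ∀ x : ShieldInput C, shift π (x, π [] x) = (p x).1 := by
    intro x; rw [shift_glue]
  have hfeas : Feasible T φ κ τ π := by
    rw [feasible_iff_shift T φ κ τ hτ]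
    intro x
    rw [hπshift x, hπnil x]
    exact (p x).2
  calc shieldValue θ φ κ T τ
      ≤ ENNReal.ofReal (expCost θ π (T - τ.length)) := iInf₂_le _ hfeas
    _ = ∑ x : ShieldInput C, ENNReal.ofReal (θ x) *
          (ENNReal.ofReal (stepCost x (π [] x)) +
            ENNReal.ofReal (expCost θ (shift π (x, π [] x)) s)) := by
        rw [hsub, ofReal_expCost_succ hC θ hθpos hθsum]
    _ ≤ ∑ x : ShieldInput C, ENNReal.ofReal (θ x) * (m x + ε) := by
        refine Finset.sum_le_sum fun x _ => ?_
        refine mul_le_mul_right ?_ _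
        rw [hπshift x, hπnil x]
        exact (hyp x).le
    _ = (∑ x : ShieldInput C, ENNReal.ofReal (θ x) * m x)
          + (∑ x : ShieldInput C, ENNReal.ofReal (θ x)) * ε := by
        simp only [mul_add, Finset.sum_add_distrib, Finset.sum_mul]
    _ = (∑ x : ShieldInput C, ENNReal.ofReal (θ x) * m x) + ε := by
        rw [← ENNReal.ofReal_sum_of_nonneg (fun x _ => (hθpos x).le), hθsum]
        simp

/-- Bellman recursion for cost-optimal bounded-horizon fairness shields:
(1) at the horizon, `v(τ)` is `0` if `φ(τ) ≤ κ` and `∞` otherwise;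
(2) below the horizon, `v(τ) = Σ_{x=(g,r,c)} θ(x) · min(v(τ·(x,r)), c + v(τ·(x,¬r)))`. -/
theorem shieldValue_bellman (C : Finset ℝ) (hC : ∀ c ∈ C, 0 ≤ c)
    (θ : ShieldInput C → ℝ) (hθpos : ∀ x, 0 < θ x)
    (hθsum : ∑ x : ShieldInput C, θ x = 1)
    (T : ℕ) (φ : List (ShieldEntry C) → ℝ) (κ : ℝ) :
    (∀ τ : List (ShieldEntry C), τ.length = T →
      shieldValue θ φ κ T τ = if φ τ ≤ κ then 0 else ⊤) ∧
    (∀ τ : List (ShieldEntry C), τ.length < T →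
      shieldValue θ φ κ T τ =
        ∑ x : ShieldInput C, ENNReal.ofReal (θ x) *
          min (shieldValue θ φ κ T (τ ++ [(x, x.2.1)]))
            (ENNReal.ofReal (x.2.2 : ℝ) +
              shieldValue θ φ κ T (τ ++ [(x, !x.2.1)]))) := by
  constructor
  · intro τ h
    exact shieldValue_horizon θ T φ κ τ h
  · intro τ h
    refine le_antisymm (step_le hC θ hθpos hθsum T φ κ τ h)
      (step_ge hC θ hθpos hθsum T φ κ τ h)

end Main
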